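/- Let 0 < s < 1 and let g : ℝ³ \ {0} → ℝ be given by g(y) = |y|^{2s-3}. For every x ∈ [0, 2π]³ there is a constant C > 0 (depending on s and x) such that for all (n,k,l) ∈ ℤ³ with n² + k² + l² ≥ 4, | ∑_{(ε₁,ε₂,ε₃) ∈ {-1,1}³} g(2π n + ε₁ x₁, 2π k + ε₂ x₂, 2π l + ε₃ x₃) - 8 g(2π n, 2π k, 2π l) | ≤ C (n² + k² + l²)^{s - 5/2}. In particular, since s - 5/2 < -3/2, these grouped terms form an absolutely summable family over (n,k,l) ∈ ℤ³ with n²+k²+l² ≥ 4. -/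

import Mathlib

open scoped BigOperators Real

/-- The power kernel `g(y) = |y|^{2s-3}` on `ℝ³ \ {0}` (written in coordinates). -/
noncomputable def powKernel (s y₁ y₂ y₃ : ℝ) : ℝ :=
  Real.sqrt (y₁ ^ 2 + y₂ ^ 2 + y₃ ^ 2) ^ (2 * s - 3)

/-- The grouped sum `∑_{ε ∈ {-1,1}³} g(2πn + ε₁x₁, 2πk + ε₂x₂, 2πl + ε₃x₃) - 8 g(2πn,2πk,2πl)`. -/
noncomputable def groupedTerm (s x₁ x₂ x₃ : ℝ) (n k l : ℤ) : ℝ :=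
  (∑ ε ∈ (({-1, 1} : Finset ℝ) ×ˢ ({-1, 1} : Finset ℝ) ×ˢ ({-1, 1} : Finset ℝ)),
      powKernel s (2 * π * n + ε.1 * x₁) (2 * π * k + ε.2.1 * x₂) (2 * π * l + ε.2.2 * x₃)) -
    8 * powKernel s (2 * π * n) (2 * π * k) (2 * π * l)

namespace GroupedTermAux

open Real

lemma hasDerivAt_pk (A q u : ℝ) (h : 0 < A + u^2) :
    HasDerivAt (fun v : ℝ => (A + v^2) ^ q) (2*u * q * (A+u^2)^(q-1)) u := by
  have h1 : HasDerivAt (fun v : ℝ => A + v^2) (2*u) u := by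
    simpa using (hasDerivAt_pow 2 u).const_add A
  exact h1.rpow_const (Or.inl h.ne')

lemma hasDerivAt_pk' (A q u : ℝ) (h : 0 < A + u^2) :
    HasDerivAt (fun v : ℝ => 2*v * q * (A+v^2)^(q-1))
      (2*q*(A+u^2)^(q-1) + (2*u*q)*(2*u*(q-1)*(A+u^2)^(q-1-1))) u := by
  have h1 : HasDerivAt (fun v : ℝ => (A+v^2)^(q-1)) (2*u*(q-1)*(A+u^2)^(q-1-1)) u :=
    hasDerivAt_pk A (q-1) u h
  have h2 : HasDerivAt (fun v : ℝ => 2*v*q) (2*q) u := by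
    simpa using ((hasDerivAt_id u).const_mul (2:ℝ)).mul_const q
  exact h2.mul h1

lemma secderiv_bound (A q u m : ℝ) (hq : q ≤ 0) (hm : 0 < m) (hA : 0 ≤ A)
    (hlow : m ≤ A + u^2) :
    |2*q*(A+u^2)^(q-1) + (2*u*q)*(2*u*(q-1)*(A+u^2)^(q-1-1))|
      ≤ (2 * |q| + 4 * |q| * |q-1|) * m^(q-1) := by
  have hpos : (0:ℝ) < A + u^2 := lt_of_lt_of_le hm hlow
  have hX : (A+u^2)^(q-1) ≤ m^(q-1) :=
    rpow_le_rpow_of_nonpos hm hlow (by linarith)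
  have hXnn : (0:ℝ) ≤ (A+u^2)^(q-1) := rpow_nonneg hpos.le _
  have hYnn : (0:ℝ) ≤ (A+u^2)^(q-1-1) := rpow_nonneg hpos.le _
  have hXY : (A+u^2)^(q-1) = (A+u^2) * (A+u^2)^(q-1-1) := by
    have h := Real.rpow_add hpos 1 (q-1-1)
    rw [rpow_one, show (1:ℝ)+(q-1-1) = q-1 by ring] at h
    exact h
  have e1 : |2*q*(A+u^2)^(q-1)| = 2 * |q| * (A+u^2)^(q-1) := by
    rw [abs_mul, abs_mul, abs_of_nonneg hXnn, abs_two]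
  have e2 : |(2*u*q)*(2*u*(q-1)*(A+u^2)^(q-1-1))|
      = (4*u^2) * (|q| * |q-1|) * (A+u^2)^(q-1-1) := by
    rw [show (2*u*q)*(2*u*(q-1)*(A+u^2)^(q-1-1))
        = (4*u^2)*((q*(q-1))*(A+u^2)^(q-1-1)) by ring]
    simp [abs_mul, abs_of_nonneg (sq_nonneg u), abs_of_nonneg hYnn]
    ring
  have hu : u^2 ≤ A + u^2 := by linarith
  have ht2 : (4*u^2) * (|q| * |q-1|) * (A+u^2)^(q-1-1) ≤ 4 * |q| * |q-1| * (A+u^2)^(q-1) := by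
    rw [hXY]
    have hqq := mul_nonneg (abs_nonneg q) (abs_nonneg (q-1))
    nlinarith [mul_le_mul_of_nonneg_right hu hYnn, mul_nonneg hqq hYnn]
  calc |2*q*(A+u^2)^(q-1) + (2*u*q)*(2*u*(q-1)*(A+u^2)^(q-1-1))|
      ≤ |2*q*(A+u^2)^(q-1)| + |(2*u*q)*(2*u*(q-1)*(A+u^2)^(q-1-1))| := abs_add_le _ _
    _ ≤ 2 * |q| * (A+u^2)^(q-1) + 4 * |q| * |q-1| * (A+u^2)^(q-1) := by rw [e1, e2]; linarith
    _ ≤ (2 * |q| + 4 * |q| * |q-1|) * m^(q-1) := by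
        have h2 : (0:ℝ) ≤ 2 * |q| := by positivity
        have h4 : (0:ℝ) ≤ 4 * |q| * |q-1| := by positivity
        nlinarith [mul_le_mul_of_nonneg_left hX h2, mul_le_mul_of_nonneg_left hX h4]

lemma secdiff (q : ℝ) (hq : q ≤ 0) (A c t m : ℝ) (ht : 0 ≤ t) (hm : 0 < m) (hA : 0 ≤ A)
    (hlow : ∀ u, c - t ≤ u → u ≤ c + t → m ≤ A + u^2) :
    |(A+(c+t)^2)^q + (A+(c-t)^2)^q - 2*(A+c^2)^q|
      ≤ (2 * |q| + 4 * |q| * |q-1|) * m^(q-1) * (2*t^2) := by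
  set M : ℝ := (2 * |q| + 4 * |q| * |q-1|) * m^(q-1) with hM
  have hMnn : 0 ≤ M := by positivity
  set F : ℝ → ℝ := fun u => (A + u^2)^q with hF
  set F' : ℝ → ℝ := fun u => 2*u * q * (A+u^2)^(q-1) with hF'
  have hposmem : ∀ u ∈ Set.Icc (c-t) (c+t), 0 < A + u^2 := fun u hu =>
    lt_of_lt_of_le hm (hlow u hu.1 hu.2)
  have lip : ∀ u ∈ Set.Icc (c-t) (c+t), ∀ v ∈ Set.Icc (c-t) (c+t),
      |F' v - F' u| ≤ M * |v - u| := by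
    intro u hu v hv
    have := Convex.norm_image_sub_le_of_norm_hasDerivWithin_le
      (f := F') (f' := fun u => 2*q*(A+u^2)^(q-1) + (2*u*q)*(2*u*(q-1)*(A+u^2)^(q-1-1)))
      (s := Set.Icc (c-t) (c+t)) (C := M)
      (fun w hw => (hasDerivAt_pk' A q w (hposmem w hw)).hasDerivWithinAt)
      (fun w hw => by
        rw [Real.norm_eq_abs]
        exact secderiv_bound A q w m hq hm hA (hlow w hw.1 hw.2))
      (convex_Icc _ _) hu hv
    simpa [Real.norm_eq_abs] using this
  set G : ℝ → ℝ := fun τ => (A+(c+τ)^2)^q + (A+(c-τ)^2)^q - 2*(A+c^2)^q with hG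
  have hGderiv : ∀ τ ∈ Set.Icc (0:ℝ) t, HasDerivAt G (F' (c+τ) - F' (c-τ)) τ := by
    intro τ hτ
    have hin1 : c + τ ∈ Set.Icc (c-t) (c+t) := by
      constructor <;> [linarith [hτ.1]; linarith [hτ.2]]
    have hin2 : c - τ ∈ Set.Icc (c-t) (c+t) := by
      constructor <;> [linarith [hτ.2]; linarith [hτ.1]]
    have h1 : HasDerivAt (fun τ : ℝ => (A+(c+τ)^2)^q) (F' (c+τ) * 1) τ :=
      HasDerivAt.comp τ (hasDerivAt_pk A q (c+τ) (hposmem _ hin1))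
        ((hasDerivAt_id τ).const_add c)
    have h2 : HasDerivAt (fun τ : ℝ => (A+(c-τ)^2)^q) (F' (c-τ) * (-1)) τ :=
      HasDerivAt.comp τ (hasDerivAt_pk A q (c-τ) (hposmem _ hin2))
        ((hasDerivAt_id τ).const_sub c)
    have h3 := (h1.add h2).sub_const (2*(A+c^2)^q)
    exact h3.congr_deriv (by ring)
  have hG0 : G 0 = 0 := by simp [hG]; ring
  have bound : ∀ τ ∈ Set.Icc (0:ℝ) t, ‖F' (c+τ) - F' (c-τ)‖ ≤ M * (2*t) := by
    intro τ hτ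
    have hin2 : c - τ ∈ Set.Icc (c-t) (c+t) := by
      constructor <;> [linarith [hτ.2]; linarith [hτ.1]]
    have hin1 : c + τ ∈ Set.Icc (c-t) (c+t) := by
      constructor <;> [linarith [hτ.1]; linarith [hτ.2]]
    have h := lip (c-τ) hin2 (c+τ) hin1
    rw [Real.norm_eq_abs]
    have e : |(c+τ) - (c-τ)| = 2*τ := by
      rw [show (c+τ) - (c-τ) = 2*τ by ring]
      exact abs_of_nonneg (by linarith [hτ.1])
    rw [e] at h
    calc |F' (c+τ) - F' (c-τ)| ≤ M * (2*τ) := h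
      _ ≤ M * (2*t) := by nlinarith [hτ.2, hτ.1]
  have key := Convex.norm_image_sub_le_of_norm_hasDerivWithin_le
    (f := G) (f' := fun τ => F' (c+τ) - F' (c-τ)) (s := Set.Icc (0:ℝ) t) (C := M * (2*t))
    (fun τ hτ => (hGderiv τ hτ).hasDerivWithinAt) bound (convex_Icc _ _)
    (Set.left_mem_Icc.2 ht) (Set.right_mem_Icc.2 ht)
  rw [hG0, sub_zero, Real.norm_eq_abs, Real.norm_eq_abs, sub_zero, abs_of_nonneg ht] at key
  calc |G t| ≤ M * (2*t) * t := key
    _ = M * (2*t^2) := by ring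

/-- abbreviation for the rpow kernel -/
noncomputable def pk (q u v w : ℝ) : ℝ := (u^2+v^2+w^2)^q

lemma Dbound₁ (q u v w t m : ℝ) (hq : q ≤ 0) (ht : 0 ≤ t) (hm : 0 < m)
    (hlow : ∀ d, |d| ≤ t → m ≤ (u+d)^2 + v^2 + w^2) :
    |pk q (u+t) v w + pk q (u-t) v w - 2 * pk q u v w|
      ≤ (2 * |q| + 4 * |q| * |q-1|) * m^(q-1) * (2*t^2) := by
  have h := secdiff q hq (v^2+w^2) u t m ht hm (by positivity)
    (fun x h1 h2 => by
      have hx := hlow (x - u) (abs_le.2 ⟨by linarith, by linarith⟩)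
      calc m ≤ (u+(x-u))^2 + v^2 + w^2 := hx
        _ = v^2+w^2 + x^2 := by ring)
  calc |pk q (u+t) v w + pk q (u-t) v w - 2 * pk q u v w|
      = |(v^2+w^2+(u+t)^2)^q + (v^2+w^2+(u-t)^2)^q - 2*(v^2+w^2+u^2)^q| := by
        unfold pk
        rw [show (u+t)^2+v^2+w^2 = v^2+w^2+(u+t)^2 by ring,
          show (u-t)^2+v^2+w^2 = v^2+w^2+(u-t)^2 by ring,
          show u^2+v^2+w^2 = v^2+w^2+u^2 by ring]
    _ ≤ _ := h

lemma Dbound₂ (q u v w t m : ℝ) (hq : q ≤ 0) (ht : 0 ≤ t) (hm : 0 < m)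
    (hlow : ∀ d, |d| ≤ t → m ≤ u^2 + (v+d)^2 + w^2) :
    |pk q u (v+t) w + pk q u (v-t) w - 2 * pk q u v w|
      ≤ (2 * |q| + 4 * |q| * |q-1|) * m^(q-1) * (2*t^2) := by
  have h := secdiff q hq (u^2+w^2) v t m ht hm (by positivity)
    (fun x h1 h2 => by
      have hx := hlow (x - v) (abs_le.2 ⟨by linarith, by linarith⟩)
      calc m ≤ u^2 + (v+(x-v))^2 + w^2 := hx
        _ = u^2+w^2 + x^2 := by ring)
  calc |pk q u (v+t) w + pk q u (v-t) w - 2 * pk q u v w|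
      = |(u^2+w^2+(v+t)^2)^q + (u^2+w^2+(v-t)^2)^q - 2*(u^2+w^2+v^2)^q| := by
        unfold pk
        rw [show u^2+(v+t)^2+w^2 = u^2+w^2+(v+t)^2 by ring,
          show u^2+(v-t)^2+w^2 = u^2+w^2+(v-t)^2 by ring,
          show u^2+v^2+w^2 = u^2+w^2+v^2 by ring]
    _ ≤ _ := h

lemma Dbound₃ (q u v w t m : ℝ) (hq : q ≤ 0) (ht : 0 ≤ t) (hm : 0 < m)
    (hlow : ∀ d, |d| ≤ t → m ≤ u^2 + v^2 + (w+d)^2) :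
    |pk q u v (w+t) + pk q u v (w-t) - 2 * pk q u v w|
      ≤ (2 * |q| + 4 * |q| * |q-1|) * m^(q-1) * (2*t^2) := by
  have h := secdiff q hq (u^2+v^2) w t m ht hm (by positivity)
    (fun x h1 h2 => by
      have hx := hlow (x - w) (abs_le.2 ⟨by linarith, by linarith⟩)
      calc m ≤ u^2 + v^2 + (w+(x-w))^2 := hx
        _ = u^2+v^2 + x^2 := by ring)
  unfold pk
  exact h

lemma abs_comb (b1 b2 b3 b4 b5 b6 b7 β : ℝ) (h1 : |b1| ≤ β) (h2 : |b2| ≤ β)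
    (h3 : |b3| ≤ β) (h4 : |b4| ≤ β) (h5 : |b5| ≤ β) (h6 : |b6| ≤ β) (h7 : |b7| ≤ β) :
    |b1+b2+b3+b4+2*(b5+b6)+4*b7| ≤ 12*β := by
  have a1 := abs_le.1 h1; have a2 := abs_le.1 h2; have a3 := abs_le.1 h3
  have a4 := abs_le.1 h4; have a5 := abs_le.1 h5; have a6 := abs_le.1 h6
  have a7 := abs_le.1 h7
  rw [abs_le]
  constructor <;> [linarith [a1.1,a2.1,a3.1,a4.1,a5.1,a6.1,a7.1];
    linarith [a1.2,a2.2,a3.2,a4.2,a5.2,a6.2,a7.2]]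

lemma lower_bd (a b c d₁ d₂ d₃ R : ℝ) (hR : 4 ≤ R) (h : a^2+b^2+c^2 = 4*π^2*R)
    (h1 : d₁^2 ≤ 4*π^2) (h2 : d₂^2 ≤ 4*π^2) (h3 : d₃^2 ≤ 4*π^2) :
    π^2/20*R ≤ (a+d₁)^2 + (b+d₂)^2 + (c+d₃)^2 := by
  nlinarith [sq_nonneg (4*a+5*d₁), sq_nonneg (4*b+5*d₂), sq_nonneg (4*c+5*d₃),
    mul_nonneg (sq_nonneg π) (by linarith : (0:ℝ) ≤ R - 4)]

lemma powKernel_eq (s u v w : ℝ) :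
    powKernel s u v w = (u^2 + v^2 + w^2) ^ (s - 3/2) := by
  unfold powKernel
  have h : (0:ℝ) ≤ u^2 + v^2 + w^2 := by positivity
  rw [Real.sqrt_eq_rpow, ← Real.rpow_mul h]
  norm_num
  ring_nf

lemma split_lemma (s x₁ x₂ x₃ : ℝ) (n k l : ℤ) :
    groupedTerm s x₁ x₂ x₃ n k l =
      ((pk (s-3/2) (2*π*n + x₁) (2*π*k + x₂) (2*π*l + x₃)
        + pk (s-3/2) (2*π*n - x₁) (2*π*k + x₂) (2*π*l + x₃)
        - 2 * pk (s-3/2) (2*π*n) (2*π*k + x₂) (2*π*l + x₃))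
      + (pk (s-3/2) (2*π*n + x₁) (2*π*k + x₂) (2*π*l - x₃)
        + pk (s-3/2) (2*π*n - x₁) (2*π*k + x₂) (2*π*l - x₃)
        - 2 * pk (s-3/2) (2*π*n) (2*π*k + x₂) (2*π*l - x₃))
      + (pk (s-3/2) (2*π*n + x₁) (2*π*k - x₂) (2*π*l + x₃)
        + pk (s-3/2) (2*π*n - x₁) (2*π*k - x₂) (2*π*l + x₃)
        - 2 * pk (s-3/2) (2*π*n) (2*π*k - x₂) (2*π*l + x₃))
      + (pk (s-3/2) (2*π*n + x₁) (2*π*k - x₂) (2*π*l - x₃)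
        + pk (s-3/2) (2*π*n - x₁) (2*π*k - x₂) (2*π*l - x₃)
        - 2 * pk (s-3/2) (2*π*n) (2*π*k - x₂) (2*π*l - x₃))
      + 2 * ((pk (s-3/2) (2*π*n) (2*π*k + x₂) (2*π*l + x₃)
        + pk (s-3/2) (2*π*n) (2*π*k - x₂) (2*π*l + x₃)
        - 2 * pk (s-3/2) (2*π*n) (2*π*k) (2*π*l + x₃))
      + (pk (s-3/2) (2*π*n) (2*π*k + x₂) (2*π*l - x₃)
        + pk (s-3/2) (2*π*n) (2*π*k - x₂) (2*π*l - x₃)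
        - 2 * pk (s-3/2) (2*π*n) (2*π*k) (2*π*l - x₃)))
      + 4 * (pk (s-3/2) (2*π*n) (2*π*k) (2*π*l + x₃)
        + pk (s-3/2) (2*π*n) (2*π*k) (2*π*l - x₃)
        - 2 * pk (s-3/2) (2*π*n) (2*π*k) (2*π*l))) := by
  unfold groupedTerm
  rw [Finset.sum_product]
  simp only [Finset.sum_product, Finset.sum_pair (show (-1:ℝ) ≠ 1 by norm_num),
    neg_mul, one_mul, ← sub_eq_add_neg, powKernel_eq, pk]
  ring

set_option maxHeartbeats 1000000 in
lemma pointwise_bound (s : ℝ) (hs1 : s < 1) (x₁ x₂ x₃ : ℝ)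
    (h1a : 0 ≤ x₁) (h1b : x₁ ≤ 2*π) (h2a : 0 ≤ x₂) (h2b : x₂ ≤ 2*π)
    (h3a : 0 ≤ x₃) (h3b : x₃ ≤ 2*π) (n k l : ℤ) (h4 : 4 ≤ n^2+k^2+l^2) :
    |groupedTerm s x₁ x₂ x₃ n k l| ≤
      (12 * ((2 * |s-3/2| + 4 * |s-3/2| * |s-3/2-1|) * (π^2/20)^(s-3/2-1) * (2*(2*π)^2)))
        * ((n:ℝ)^2+(k:ℝ)^2+(l:ℝ)^2)^(s-5/2) := by
  have hπ := Real.pi_pos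
  rw [split_lemma]
  set q := s - 3/2 with hq'
  have hq : q ≤ 0 := by rw [hq']; linarith
  set R := (n:ℝ)^2+(k:ℝ)^2+(l:ℝ)^2 with hR
  have hR4 : (4:ℝ) ≤ R := by rw [hR]; exact_mod_cast h4
  have hRpos : (0:ℝ) < R := by linarith
  set m := π^2/20*R with hm'
  have hm : 0 < m := by rw [hm']; exact mul_pos (by positivity) hRpos
  have habc : (2*π*(n:ℝ))^2 + (2*π*(k:ℝ))^2 + (2*π*(l:ℝ))^2 = 4*π^2*R := by rw [hR]; ring
  have master : ∀ δ₁ δ₂ δ₃ : ℝ, δ₁^2 ≤ 4*π^2 → δ₂^2 ≤ 4*π^2 → δ₃^2 ≤ 4*π^2 →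
      m ≤ (2*π*(n:ℝ)+δ₁)^2 + (2*π*(k:ℝ)+δ₂)^2 + (2*π*(l:ℝ)+δ₃)^2 := by
    intro d1 d2 d3 e1 e2 e3
    rw [hm']
    exact lower_bd _ _ _ _ _ _ R hR4 habc e1 e2 e3
  have hdsq : ∀ d t : ℝ, |d| ≤ t → t ≤ 2*π → d^2 ≤ 4*π^2 := by
    intro d t hd ht
    have h := abs_le.1 hd
    nlinarith [h.1, h.2]
  have hx1sq : x₁^2 ≤ 4*π^2 := by nlinarith
  have hx2sq : x₂^2 ≤ 4*π^2 := by nlinarith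
  have hx3sq : x₃^2 ≤ 4*π^2 := by nlinarith
  have hzsq : (0:ℝ)^2 ≤ 4*π^2 := by nlinarith [sq_nonneg π]
  set K := 2 * |q| + 4 * |q| * |q-1| with hK
  set β := K * m^(q-1) * (2*(2*π)^2) with hβ
  have hKnn : 0 ≤ K := by
    rw [hK]
    have := abs_nonneg q; have := abs_nonneg (q-1)
    nlinarith [mul_nonneg (abs_nonneg q) (abs_nonneg (q-1))]
  have hKm : 0 ≤ K * m^(q-1) := mul_nonneg hKnn (rpow_nonneg hm.le _)
  have step : ∀ t : ℝ, 0 ≤ t → t ≤ 2*π → K * m^(q-1) * (2*t^2) ≤ β := by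
    intro t ta tb
    rw [hβ]
    have h2 : 2*t^2 ≤ 2*(2*π)^2 := by nlinarith
    nlinarith [mul_le_mul_of_nonneg_left h2 hKm]
  have hb1 : ∀ v w : ℝ, (∀ d : ℝ, |d| ≤ x₁ → m ≤ (2*π*(n:ℝ)+d)^2 + v^2 + w^2) →
      |pk q (2*π*↑n + x₁) v w + pk q (2*π*↑n - x₁) v w - 2 * pk q (2*π*↑n) v w| ≤ β := by
    intro v w hlow
    have h := Dbound₁ q (2*π*(n:ℝ)) v w x₁ m hq h1a hm hlow
    exact le_trans h (step x₁ h1a h1b)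
  have hb2 : ∀ w : ℝ, (∀ d : ℝ, |d| ≤ x₂ → m ≤ (2*π*(n:ℝ))^2 + (2*π*(k:ℝ)+d)^2 + w^2) →
      |pk q (2*π*↑n) (2*π*↑k + x₂) w + pk q (2*π*↑n) (2*π*↑k - x₂) w
        - 2 * pk q (2*π*↑n) (2*π*↑k) w| ≤ β := by
    intro w hlow
    have h := Dbound₂ q (2*π*(n:ℝ)) (2*π*(k:ℝ)) w x₂ m hq h2a hm hlow
    exact le_trans h (step x₂ h2a h2b)
  have hb3 : (∀ d : ℝ, |d| ≤ x₃ → m ≤ (2*π*(n:ℝ))^2 + (2*π*(k:ℝ))^2 + (2*π*(l:ℝ)+d)^2) →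
      |pk q (2*π*↑n) (2*π*↑k) (2*π*↑l + x₃) + pk q (2*π*↑n) (2*π*↑k) (2*π*↑l - x₃)
        - 2 * pk q (2*π*↑n) (2*π*↑k) (2*π*↑l)| ≤ β := by
    intro hlow
    have h := Dbound₃ q (2*π*(n:ℝ)) (2*π*(k:ℝ)) (2*π*(l:ℝ)) x₃ m hq h3a hm hlow
    exact le_trans h (step x₃ h3a h3b)
  have g1 := hb1 (2*π*(k:ℝ) + x₂) (2*π*(l:ℝ) + x₃) (fun d hd =>
    master d x₂ x₃ (hdsq d x₁ hd h1b) hx2sq hx3sq)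
  have g2 := hb1 (2*π*(k:ℝ) + x₂) (2*π*(l:ℝ) - x₃) (fun d hd => by
    have h := master d x₂ (-x₃) (hdsq d x₁ hd h1b) hx2sq (by rw [neg_sq]; exact hx3sq)
    rwa [← sub_eq_add_neg] at h)
  have g3 := hb1 (2*π*(k:ℝ) - x₂) (2*π*(l:ℝ) + x₃) (fun d hd => by
    have h := master d (-x₂) x₃ (hdsq d x₁ hd h1b) (by rw [neg_sq]; exact hx2sq) hx3sq
    rwa [← sub_eq_add_neg] at h)
  have g4 := hb1 (2*π*(k:ℝ) - x₂) (2*π*(l:ℝ) - x₃) (fun d hd => by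
    have h := master d (-x₂) (-x₃) (hdsq d x₁ hd h1b) (by rw [neg_sq]; exact hx2sq)
      (by rw [neg_sq]; exact hx3sq)
    rwa [← sub_eq_add_neg, ← sub_eq_add_neg] at h)
  have g5 := hb2 (2*π*(l:ℝ) + x₃) (fun d hd => by
    have h := master 0 d x₃ hzsq (hdsq d x₂ hd h2b) hx3sq
    rwa [add_zero] at h)
  have g6 := hb2 (2*π*(l:ℝ) - x₃) (fun d hd => by
    have h := master 0 d (-x₃) hzsq (hdsq d x₂ hd h2b) (by rw [neg_sq]; exact hx3sq)
    rwa [add_zero, ← sub_eq_add_neg] at h)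
  have g7 := hb3 (fun d hd => by
    have h := master 0 0 d hzsq hzsq (hdsq d x₃ hd h3b)
    rwa [add_zero, add_zero] at h)
  refine le_trans (abs_comb _ _ _ _ _ _ _ β g1 g2 g3 g4 g5 g6 g7) ?_
  have hsplit : m^(q-1) = (π^2/20)^(q-1) * R^(q-1) := by
    rw [hm', Real.mul_rpow (by positivity) hRpos.le]
  have hexp : R^(q-1) = R^(s-5/2) := by
    congr 1
    rw [hq']; ring
  apply le_of_eq
  rw [hβ, hsplit, hexp]
  ring

lemma summable_F (r : ℝ) (hr : 1/2 < r) :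
    Summable (fun j : ℤ => ((j:ℝ)^2+1)^(-r)) := by
  have h2r : 1 < 2*r := by linarith
  have hsum : Summable (fun j : ℤ => |(j:ℝ)|^(-(2*r)) + (if j = 0 then (1:ℝ) else 0)) :=
    (Real.summable_abs_int_rpow h2r).add
      (summable_of_ne_finset_zero (s := {0}) (by intro b hb; simp at hb; simp [hb]))
  refine Summable.of_nonneg_of_le (fun j => rpow_nonneg (by positivity) _) (fun j => ?_) hsum
  by_cases hj : j = 0
  · subst hj
    simp [Real.zero_rpow (by linarith : -(2*r) ≠ 0), Real.one_rpow]
  · have hj' : (0:ℝ) < (j:ℝ)^2 := by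
      have : (j:ℝ) ≠ 0 := Int.cast_ne_zero.2 hj
      positivity
    have step1 : ((j:ℝ)^2+1)^(-r) ≤ ((j:ℝ)^2)^(-r) :=
      rpow_le_rpow_of_nonpos hj' (by linarith) (by linarith)
    have step2 : ((j:ℝ)^2)^(-r) = |(j:ℝ)|^(-(2*r)) := by
      rw [← sq_abs, ← Real.rpow_natCast |(j:ℝ)| 2, ← Real.rpow_mul (abs_nonneg _)]
      norm_num
    simp only [hj, if_false, add_zero]
    rw [← step2]; exact step1

set_option maxHeartbeats 1000000 in
lemma summable_G (r : ℝ) (hr : 1/2 < r) :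
    Summable (fun v : ℤ × ℤ × ℤ =>
      ((v.1:ℝ)^2+1)^(-r) * ((((v.2.1:ℝ))^2+1)^(-r) * (((v.2.2:ℝ))^2+1)^(-r))) := by
  have hF := summable_F r hr
  have h0 : 0 ≤ fun j : ℤ => ((j:ℝ)^2+1)^(-r) :=
    fun j => rpow_nonneg (by positivity) _
  have inner : Summable (fun y : ℤ × ℤ => ((y.1:ℝ)^2+1)^(-r) * ((y.2:ℝ)^2+1)^(-r)) :=
    hF.mul_of_nonneg hF h0 h0
  exact hF.mul_of_nonneg inner h0
    (fun y => mul_nonneg (rpow_nonneg (by positivity) _) (rpow_nonneg (by positivity) _))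

end GroupedTermAux

open GroupedTermAux Real in
set_option maxHeartbeats 1000000 in
/-- For `0 < s < 1`, `g(y) = |y|^{2s-3}` and `x ∈ [0,2π]³`, there is `C > 0` such that for all
`(n,k,l) ∈ ℤ³` with `n²+k²+l² ≥ 4`,
`|∑_{ε ∈ {-1,1}³} g(2πn + ε₁x₁, 2πk + ε₂x₂, 2πl + ε₃x₃) - 8g(2πn,2πk,2πl)|
  ≤ C (n²+k²+l²)^{s-5/2}`; in particular (as `s - 5/2 < -3/2`) the grouped terms form an
absolutely summable family over `{(n,k,l) : n²+k²+l² ≥ 4}`. -/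
theorem grouped_term_bound (s : ℝ) (hs0 : 0 < s) (hs1 : s < 1) (x₁ x₂ x₃ : ℝ)
    (hx₁ : x₁ ∈ Set.Icc (0 : ℝ) (2 * π)) (hx₂ : x₂ ∈ Set.Icc (0 : ℝ) (2 * π))
    (hx₃ : x₃ ∈ Set.Icc (0 : ℝ) (2 * π)) :
    (∃ C > (0 : ℝ), ∀ n k l : ℤ, 4 ≤ n ^ 2 + k ^ 2 + l ^ 2 →
        |groupedTerm s x₁ x₂ x₃ n k l| ≤
          C * ((n : ℝ) ^ 2 + (k : ℝ) ^ 2 + (l : ℝ) ^ 2) ^ (s - 5 / 2)) ∧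
      Summable (fun q : {q : ℤ × ℤ × ℤ // 4 ≤ q.1 ^ 2 + q.2.1 ^ 2 + q.2.2 ^ 2} =>
        |groupedTerm s x₁ x₂ x₃ (q : ℤ × ℤ × ℤ).1 (q : ℤ × ℤ × ℤ).2.1 (q : ℤ × ℤ × ℤ).2.2|) := by
  obtain ⟨h1a, h1b⟩ := hx₁
  obtain ⟨h2a, h2b⟩ := hx₂
  obtain ⟨h3a, h3b⟩ := hx₃
  set C₀ := 12 * ((2 * |s-3/2| + 4 * |s-3/2| * |s-3/2-1|) * (π^2/20)^(s-3/2-1) * (2*(2*π)^2))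
    with hC₀def
  have hC₀ : 0 ≤ C₀ := by rw [hC₀def]; positivity
  have key : ∀ n k l : ℤ, 4 ≤ n^2+k^2+l^2 →
      |groupedTerm s x₁ x₂ x₃ n k l| ≤ (C₀+1) * ((n:ℝ)^2+(k:ℝ)^2+(l:ℝ)^2)^(s-5/2) := by
    intro n k l h
    refine le_trans (pointwise_bound s hs1 x₁ x₂ x₃ h1a h1b h2a h2b h3a h3b n k l h) ?_
    have hXnn : (0:ℝ) ≤ ((n:ℝ)^2+(k:ℝ)^2+(l:ℝ)^2)^(s-5/2) := rpow_nonneg (by positivity) _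
    rw [← hC₀def]
    nlinarith [hXnn]
  constructor
  · exact ⟨C₀+1, by linarith, key⟩
  · set r := (5/2 - s)/3 with hrdef
    have hr : 1/2 < r := by rw [hrdef]; linarith
    have hsum : Summable (fun v : ℤ × ℤ × ℤ => ((C₀+1) * ((4/5:ℝ)^(3:ℕ))^(-r)) *
        (((v.1:ℝ)^2+1)^(-r) * ((((v.2.1:ℝ))^2+1)^(-r) * (((v.2.2:ℝ))^2+1)^(-r)))) :=
      (summable_G r hr).mul_left _
    have hsub := hsum.subtype {q : ℤ × ℤ × ℤ | 4 ≤ q.1^2 + q.2.1^2 + q.2.2^2}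
    refine Summable.of_nonneg_of_le (fun b => abs_nonneg _) (fun b => ?_) hsub
    obtain ⟨⟨n, k, l⟩, hb⟩ := b
    have hb' : 4 ≤ n^2 + k^2 + l^2 := hb
    have hR4 : (4:ℝ) ≤ (n:ℝ)^2+(k:ℝ)^2+(l:ℝ)^2 := by exact_mod_cast hb'
    have hR0 : (0:ℝ) < (n:ℝ)^2+(k:ℝ)^2+(l:ℝ)^2 := by linarith
    set R := (n:ℝ)^2+(k:ℝ)^2+(l:ℝ)^2 with hRdef
    have e1 : (n:ℝ)^2+1 ≤ 5/4*R := by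
      rw [hRdef]; nlinarith [sq_nonneg (k:ℝ), sq_nonneg (l:ℝ)]
    have e2 : (k:ℝ)^2+1 ≤ 5/4*R := by
      rw [hRdef]; nlinarith [sq_nonneg (n:ℝ), sq_nonneg (l:ℝ)]
    have e3 : (l:ℝ)^2+1 ≤ 5/4*R := by
      rw [hRdef]; nlinarith [sq_nonneg (n:ℝ), sq_nonneg (k:ℝ)]
    have hP : (((n:ℝ)^2+1)*(((k:ℝ)^2+1)*((l:ℝ)^2+1))) * (4/5:ℝ)^(3:ℕ) ≤ R^(3:ℕ) := by
      have hprod : ((n:ℝ)^2+1)*(((k:ℝ)^2+1)*((l:ℝ)^2+1)) ≤ (5/4*R)*((5/4*R)*(5/4*R)) := by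
        have p1 : (0:ℝ) ≤ (n:ℝ)^2+1 := by positivity
        have p2 : (0:ℝ) ≤ (k:ℝ)^2+1 := by positivity
        have p3 : (0:ℝ) ≤ (l:ℝ)^2+1 := by positivity
        gcongr
      nlinarith [hprod]
    have step0 : R^(s-5/2) = (R^(3:ℕ))^(-r) := by
      rw [← Real.rpow_natCast R 3, ← Real.rpow_mul hR0.le]
      congr 1
      rw [hrdef]; push_cast; ring
    have step1 : (R^(3:ℕ))^(-r)
        ≤ ((((n:ℝ)^2+1)*(((k:ℝ)^2+1)*((l:ℝ)^2+1))) * (4/5:ℝ)^(3:ℕ))^(-r) :=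
      rpow_le_rpow_of_nonpos (by positivity) hP (by linarith)
    have step2 : ((((n:ℝ)^2+1)*(((k:ℝ)^2+1)*((l:ℝ)^2+1))) * (4/5:ℝ)^(3:ℕ))^(-r)
        = ((4/5:ℝ)^(3:ℕ))^(-r) *
          (((n:ℝ)^2+1)^(-r) * (((k:ℝ)^2+1)^(-r) * ((l:ℝ)^2+1)^(-r))) := by
      rw [Real.mul_rpow (by positivity) (by positivity),
        Real.mul_rpow (by positivity) (by positivity),
        Real.mul_rpow (by positivity) (by positivity)]
      ring
    have chain : |groupedTerm s x₁ x₂ x₃ n k l| ≤ ((C₀+1) * ((4/5:ℝ)^(3:ℕ))^(-r)) *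
        (((n:ℝ)^2+1)^(-r) * ((((k:ℝ))^2+1)^(-r) * (((l:ℝ))^2+1)^(-r))) := by
      refine le_trans (key n k l hb') ?_
      rw [step0]
      calc (C₀+1) * (R^(3:ℕ))^(-r)
          ≤ (C₀+1) * (((((n:ℝ)^2+1)*(((k:ℝ)^2+1)*((l:ℝ)^2+1))) * (4/5:ℝ)^(3:ℕ))^(-r)) :=
            mul_le_mul_of_nonneg_left step1 (by linarith)
        _ = ((C₀+1) * ((4/5:ℝ)^(3:ℕ))^(-r)) *
            (((n:ℝ)^2+1)^(-r) * ((((k:ℝ))^2+1)^(-r) * (((l:ℝ))^2+1)^(-r))) := by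
            rw [step2]; ring
    exact chain
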